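/- Let α ≥ 0 and N ∈ ℤ. Let w be a weight on (a,b), set W*(t) := ∫_t^b w(s) ds for t ∈ [a,b], and let {x_k}_{k=N}^∞ be a discretizing sequence of W*. Then for any integer n ≥ N, ess sup_{x∈(x_n, b)} W*(x)^α h(x) ≈ sup_{n+1 ≤ k < ∞} 2^{-kα} h(x_k) holds for all non-negative non-decreasing functions h on (a,b), with implicit constants depending only on α and the constants in the discretizing property W*(x_k) ≈ 2^{-k}. -/

import Mathlib

open MeasureTheory Set ENNReal

noncomputable section

/-- The open interval `(a, b)` with extended-real endpoints, viewed as a set of reals. -/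
def io (a b : EReal) : Set ℝ := {x : ℝ | a < (x : EReal) ∧ (x : EReal) < b}

/-- A weight on `(a, b)`: a measurable function which is positive and finite on `(a, b)`. -/
def IsWeight (a b : EReal) (u : ℝ → ℝ≥0∞) : Prop :=
  Measurable u ∧ ∀ x ∈ io a b, 0 < u x ∧ u x < ⊤

/-- `W*(t) = ∫_t^b w`. -/
def Wstar (b : EReal) (w : ℝ → ℝ≥0∞) (t : ℝ) : ℝ≥0∞ := ∫⁻ s in io t b, w s

/-- `{x_k}_{k=N}^∞ ⊂ [a, b]` is a discretizing sequence of `W*` with constants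
`d₁, d₂`: it is strictly increasing, starts at `a`, and `W*(x_k) ≈ 2 ^ (-k)`. -/
def IsDiscretizing (a b : EReal) (w : ℝ → ℝ≥0∞) (N : ℤ) (x : ℤ → ℝ)
    (d₁ d₂ : ℝ≥0∞) : Prop :=
  (x N : EReal) = a ∧
  (∀ k : ℤ, N ≤ k → x k < x (k + 1)) ∧
  (∀ k : ℤ, N ≤ k → a ≤ (x k : EReal) ∧ (x k : EReal) ≤ b) ∧
  ∀ k : ℤ, N ≤ k →
    d₁ * (2 : ℝ≥0∞) ^ (-(k : ℝ)) ≤ Wstar b w (x k) ∧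
    Wstar b w (x k) ≤ d₂ * (2 : ℝ≥0∞) ^ (-(k : ℝ))

/-! ### Auxiliary lemmas -/

lemma measurableSet_io (a b : EReal) : MeasurableSet (io a b) := by
  have : io a b = ((↑) : ℝ → EReal) ⁻¹' (Set.Ioo a b) := rfl
  rw [this]
  exact measurableSet_Ioo.preimage measurable_coe_real_ereal

lemma two_rpow_pos (y : ℝ) : (0 : ℝ≥0∞) < 2 ^ y :=
  ENNReal.rpow_pos (by norm_num) ENNReal.ofNat_ne_top

lemma two_rpow_ne_top (y : ℝ) : (2 : ℝ≥0∞) ^ y ≠ ⊤ := by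
  intro hc
  rcases (ENNReal.rpow_eq_top_iff).mp hc with ⟨h, _⟩ | ⟨h, _⟩
  · norm_num at h
  · exact ENNReal.ofNat_ne_top h

lemma two_rpow_add (y z : ℝ) : (2 : ℝ≥0∞) ^ (y + z) = 2 ^ y * 2 ^ z :=
  ENNReal.rpow_add y z (by norm_num) ENNReal.ofNat_ne_top

lemma Wstar_anti (b : EReal) (w : ℝ → ℝ≥0∞) {s t : ℝ} (hst : s ≤ t) :
    Wstar b w t ≤ Wstar b w s := by
  refine lintegral_mono_set fun z hz => ?_
  exact ⟨lt_of_le_of_lt (EReal.coe_le_coe_iff.mpr hst) hz.1, hz.2⟩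

lemma Wstar_pos {a b : EReal} {w : ℝ → ℝ≥0∞} (hw : IsWeight a b w) {t : ℝ}
    (hta : a ≤ (t : EReal)) (htb : (t : EReal) < b) : 0 < Wstar b w t := by
  obtain ⟨r, htr, hrb⟩ := EReal.lt_iff_exists_real_btwn.mp htb
  have htr' : t < r := EReal.coe_lt_coe_iff.mp htr
  have hsub : Set.Ioo t r ⊆ io (t : EReal) b := fun z hz =>
    ⟨EReal.coe_lt_coe_iff.mpr hz.1, lt_trans (EReal.coe_lt_coe_iff.mpr hz.2) hrb⟩
  refine lt_of_lt_of_le ?_ (lintegral_mono_set hsub)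
  by_contra h0
  push_neg at h0
  have h0' : ∫⁻ s in Set.Ioo t r, w s = 0 := le_antisymm h0 zero_le
  have hae := (lintegral_eq_zero_iff hw.1).mp h0'
  have hmem := ae_restrict_mem (μ := volume) (measurableSet_Ioo : MeasurableSet (Set.Ioo t r))
  have hfalse : ∀ᵐ z ∂(volume.restrict (Set.Ioo t r)), False := by
    filter_upwards [hae, hmem] with z hz1 hz2
    have hzab : z ∈ io a b :=
      ⟨lt_of_le_of_lt hta (EReal.coe_lt_coe_iff.mpr hz2.1),
        lt_trans (EReal.coe_lt_coe_iff.mpr hz2.2) hrb⟩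
    exact (hw.2 z hzab).1.ne' hz1
  have hbot : ae (volume.restrict (Set.Ioo t r)) = ⊥ :=
    Filter.eventually_false_iff_eq_bot.mp hfalse
  have h2 : volume (Set.Ioo t r) = 0 :=
    Measure.restrict_eq_zero.mp (ae_eq_bot.mp hbot)
  rw [Real.volume_Ioo] at h2
  exact (ENNReal.ofReal_pos.mpr (by linarith)).ne' h2

lemma x_strictmono {N : ℤ} {x : ℤ → ℝ} (hx : ∀ k : ℤ, N ≤ k → x k < x (k + 1))
    {j k : ℤ} (hj : N ≤ j) (hjk : j < k) : x j < x k := by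
  have H : ∀ m : ℕ, x j < x (j + 1 + (m : ℤ)) := by
    intro m
    induction m with
    | zero => simpa using hx j hj
    | succ m ih =>
      have h2 := hx (j + 1 + (m : ℤ)) (by omega)
      have e : (j + 1 + ((m + 1 : ℕ) : ℤ)) = j + 1 + (m : ℤ) + 1 := by push_cast; ring
      rw [e]
      exact ih.trans h2
  have e : j + 1 + (((k - j - 1).toNat : ℕ) : ℤ) = k := by omega
  exact e ▸ H (k - j - 1).toNat

lemma lower_alg (d₁ : ℝ≥0∞) {α : ℝ} (hα : 0 ≤ α) (k : ℤ) :
    (d₁ * 2 ^ (-((k + 1 : ℤ) : ℝ))) ^ α = d₁ ^ α * 2 ^ (-α) * 2 ^ (-((k : ℤ) : ℝ) * α) := by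
  rw [ENNReal.mul_rpow_of_nonneg _ _ hα, ← ENNReal.rpow_mul,
    show (-((k + 1 : ℤ) : ℝ)) * α = (-α) + (-((k : ℤ) : ℝ) * α) by push_cast; ring,
    two_rpow_add, ← mul_assoc]

lemma upper_alg (d₂ : ℝ≥0∞) {α : ℝ} (hα : 0 ≤ α) (k : ℤ) :
    (d₂ * 2 ^ (-((k - 1 : ℤ) : ℝ))) ^ α = d₂ ^ α * 2 ^ α * 2 ^ (-((k : ℤ) : ℝ) * α) := by
  rw [ENNReal.mul_rpow_of_nonneg _ _ hα, ← ENNReal.rpow_mul,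
    show (-((k - 1 : ℤ) : ℝ)) * α = α + (-((k : ℤ) : ℝ) * α) by push_cast; ring,
    two_rpow_add, ← mul_assoc]

theorem discretization_essSup_equiv (α : ℝ) (hα : 0 ≤ α) (d₁ d₂ : ℝ≥0∞)
    (hd₁ : 0 < d₁) (hd₂ : d₂ < ⊤) :
    ∃ c₁ c₂ : ℝ≥0∞, 0 < c₁ ∧ c₂ < ⊤ ∧
      ∀ (a b : EReal), a < b → ∀ w : ℝ → ℝ≥0∞, IsWeight a b w →
        ∀ (N : ℤ) (x : ℤ → ℝ), IsDiscretizing a b w N x d₁ d₂ →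
        ∀ n : ℤ, N ≤ n →
        ∀ h : ℝ → ℝ≥0∞, MonotoneOn h (io a b) →
          c₁ * (⨆ j : ℕ, (2 : ℝ≥0∞) ^ (-((n + 1 + j : ℤ) : ℝ) * α) *
                h (x (n + 1 + j))) ≤
              essSup (fun t : ℝ => Wstar b w t ^ α * h t) (volume.restrict (io (x n) b)) ∧
            essSup (fun t : ℝ => Wstar b w t ^ α * h t) (volume.restrict (io (x n) b)) ≤
              c₂ * ⨆ j : ℕ, (2 : ℝ≥0∞) ^ (-((n + 1 + j : ℤ) : ℝ) * α) *
                h (x (n + 1 + j)) := by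
  classical
  refine ⟨d₁ ^ α * 2 ^ (-α), d₂ ^ α * 2 ^ α, ?_, ?_, ?_⟩
  · exact ENNReal.mul_pos (ENNReal.rpow_pos_of_nonneg hd₁ hα).ne' (two_rpow_pos (-α)).ne'
  · exact ENNReal.mul_lt_top (ENNReal.rpow_lt_top_of_nonneg hα hd₂.ne)
      (lt_top_iff_ne_top.mpr (two_rpow_ne_top α))
  intro a b hab w hw N x hd n hn h hh
  obtain ⟨hxN, hxsucc, hxmem, hxW⟩ := hd
  -- basic facts about the sequence
  have hmono : ∀ j k : ℤ, N ≤ j → j ≤ k → x j ≤ x k := by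
    intro j k hj hjk
    rcases eq_or_lt_of_le hjk with rfl | hlt
    · exact le_rfl
    · exact (x_strictmono hxsucc hj hlt).le
  have hxa : ∀ k : ℤ, N ≤ k → a ≤ (x k : EReal) := fun k hk => (hxmem k hk).1
  have hxltb : ∀ k : ℤ, N ≤ k → (x k : EReal) < b := by
    intro k hk
    rcases lt_or_eq_of_le (hxmem k hk).2 with hlt | heq
    · exact hlt
    · exfalso
      have hio : io ((x k : ℝ) : EReal) b = ∅ := by
        rw [Set.eq_empty_iff_forall_notMem]
        intro z hz
        rw [← heq] at hz
        exact lt_asymm hz.1 hz.2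
      have h0 : Wstar b w (x k) = 0 := by
        rw [Wstar, hio, Measure.restrict_empty, lintegral_zero_measure]
      have hpos := (hxW k hk).1
      rw [h0] at hpos
      exact absurd hpos (not_le.mpr
        (ENNReal.mul_pos hd₁.ne' (two_rpow_pos (-(k : ℝ))).ne'))
  have hxioab : ∀ k : ℤ, N < k → (x k : ℝ) ∈ io a b := fun k hk =>
    ⟨by rw [← hxN]; exact EReal.coe_lt_coe_iff.mpr (x_strictmono hxsucc le_rfl hk),
      hxltb k hk.le⟩
  have htio : ∀ t : ℝ, x n < t → ((t : EReal) < b) → t ∈ io a b := fun t h1 h2 =>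
    ⟨by rw [← hxN]; exact EReal.coe_lt_coe_iff.mpr (lt_of_le_of_lt (hmono N n le_rfl hn) h1), h2⟩
  -- if W* t is below all the d₂ 2^{-k}, it vanishes
  have hWzero : ∀ t : ℝ, (∀ m : ℕ, Wstar b w t ≤ d₂ * 2 ^ (-((n + 1 + (m : ℤ) : ℤ) : ℝ))) →
      Wstar b w t = 0 := by
    intro t hbound
    by_contra hne
    set C : ℝ≥0∞ := d₂ * 2 ^ (-((n + 1 : ℤ) : ℝ)) with hC
    have hCne : C ≠ ⊤ := ENNReal.mul_ne_top hd₂.ne (two_rpow_ne_top _)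
    have hkey : ∀ m : ℕ, Wstar b w t ≤ C * 2⁻¹ ^ m := by
      intro m
      refine (hbound m).trans_eq ?_
      rw [hC, mul_assoc]
      congr 1
      rw [show (-((n + 1 + (m : ℤ) : ℤ) : ℝ)) = (-((n + 1 : ℤ) : ℝ)) + (-(m : ℝ)) by
          push_cast; ring,
        two_rpow_add, ENNReal.rpow_neg 2 (m : ℝ), ENNReal.rpow_natCast 2 m, ← ENNReal.inv_pow]
    rcases eq_or_ne C 0 with hC0 | hC0
    · exact hne (le_antisymm (by simpa [hC0] using hkey 0) zero_le)
    · have hdiv : Wstar b w t / C ≠ 0 := by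
        simp [ENNReal.div_eq_zero_iff, hne, hCne]
      obtain ⟨m, hm⟩ := ENNReal.exists_inv_two_pow_lt hdiv
      have h1 : C * 2⁻¹ ^ m < C * (Wstar b w t / C) :=
        (ENNReal.mul_lt_mul_iff_right hC0 hCne).mpr hm
      exact absurd (hkey m) (not_le.mpr (lt_of_lt_of_le h1 ENNReal.mul_div_le))
  -- every point of (x n, b) lies in some (x (k-1), x k]
  have hfind : ∀ t : ℝ, x n < t → ((t : EReal) < b) →
      ∃ k : ℤ, n + 1 ≤ k ∧ x (k - 1) < t ∧ t ≤ x k := by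
    intro t ht1 ht2
    have hex : ∃ k : ℤ, n + 1 ≤ k ∧ t ≤ x k := by
      by_contra hno
      push_neg at hno
      have h0 : Wstar b w t = 0 := by
        refine hWzero t fun m => ?_
        exact (Wstar_anti b w (hno (n + 1 + m) (by omega)).le).trans
          (hxW (n + 1 + m) (by omega)).2
      have hpos := Wstar_pos hw
        (le_trans (hxa n hn) (EReal.coe_le_coe_iff.mpr ht1.le)) ht2
      exact hpos.ne' h0
    obtain ⟨k, ⟨hk1, hk2⟩, hkmin⟩ := Int.exists_least_of_bdd
      (P := fun k => n + 1 ≤ k ∧ t ≤ x k) ⟨n + 1, fun z hz => hz.1⟩ hex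
    refine ⟨k, hk1, ?_, hk2⟩
    rcases eq_or_lt_of_le hk1 with heq | hlt
    · have hkn : k - 1 = n := by omega
      rw [hkn]; exact ht1
    · by_contra hc
      push_neg at hc
      have := hkmin (k - 1) ⟨by omega, hc⟩
      omega
  constructor
  · -- lower bound
    rw [ENNReal.mul_iSup]
    refine iSup_le fun j => ?_
    set k : ℤ := n + 1 + (j : ℤ) with hk
    have hNk : N ≤ k := by omega
    have hxk_mem : (x k : ℝ) ∈ io a b := hxioab k (by omega)
    have hsub : Set.Ioo (x k) (x (k + 1)) ⊆ io ((x n : ℝ) : EReal) b := by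
      intro z hz
      exact ⟨EReal.coe_lt_coe_iff.mpr ((x_strictmono hxsucc hn (by omega)).trans hz.1),
        lt_of_lt_of_le (EReal.coe_lt_coe_iff.mpr hz.2) (hxmem (k + 1) (by omega)).2⟩
    have hmeas_pos :
        volume.restrict (io ((x n : ℝ) : EReal) b) (Set.Ioo (x k) (x (k + 1))) ≠ 0 := by
      rw [Measure.restrict_apply measurableSet_Ioo, Set.inter_eq_self_of_subset_left hsub,
        Real.volume_Ioo]
      exact (ENNReal.ofReal_pos.mpr (by linarith [hxsucc k hNk])).ne'
    obtain ⟨t, htmem, htle⟩ := Measure.exists_mem_of_measure_ne_zero_of_ae hmeas_pos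
      (ae_restrict_of_ae (ae_le_essSup (fun t : ℝ => Wstar b w t ^ α * h t)))
    refine le_trans ?_ htle
    obtain ⟨ht1, ht2⟩ := htmem
    have ht_io : t ∈ io a b :=
      ⟨hxk_mem.1.trans (EReal.coe_lt_coe_iff.mpr ht1), (hsub ⟨ht1, ht2⟩).2⟩
    have hhle : h (x k) ≤ h t := hh hxk_mem ht_io ht1.le
    have hWlb : d₁ * 2 ^ (-((k + 1 : ℤ) : ℝ)) ≤ Wstar b w t :=
      (hxW (k + 1) (by omega)).1.trans (Wstar_anti b w ht2.le)
    have hWlb' := ENNReal.rpow_le_rpow hWlb hα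
    rw [lower_alg d₁ hα k] at hWlb'
    calc d₁ ^ α * 2 ^ (-α) * (2 ^ (-((k : ℤ) : ℝ) * α) * h (x k))
        = d₁ ^ α * 2 ^ (-α) * 2 ^ (-((k : ℤ) : ℝ) * α) * h (x k) := by ring
      _ ≤ Wstar b w t ^ α * h t := mul_le_mul' hWlb' hhle
  · -- upper bound
    refine essSup_le_of_ae_le _ ?_
    filter_upwards [ae_restrict_mem (measurableSet_io _ _)] with t htmem
    obtain ⟨ht1, ht2⟩ := htmem
    have ht1' : x n < t := EReal.coe_lt_coe_iff.mp ht1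
    obtain ⟨k, hk1, hk2, hk3⟩ := hfind t ht1' ht2
    have ht_io : t ∈ io a b := htio t ht1' ht2
    have hxk_mem : (x k : ℝ) ∈ io a b := hxioab k (by omega)
    have hhle : h t ≤ h (x k) := hh ht_io hxk_mem hk3
    have hWub : Wstar b w t ≤ d₂ * 2 ^ (-((k - 1 : ℤ) : ℝ)) :=
      (Wstar_anti b w hk2.le).trans (hxW (k - 1) (by omega)).2
    have h1 : Wstar b w t ^ α * h t ≤ (d₂ * 2 ^ (-((k - 1 : ℤ) : ℝ))) ^ α * h (x k) :=
      mul_le_mul' (ENNReal.rpow_le_rpow hWub hα) hhle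
    rw [upper_alg d₂ hα k] at h1
    refine h1.trans ?_
    rw [mul_assoc]
    refine mul_le_mul_right ?_ _
    have hj : (n + 1 + (((k - (n + 1)).toNat : ℕ) : ℤ)) = k := by omega
    refine le_trans (le_of_eq ?_) (le_iSup _ ((k - (n + 1)).toNat))
    rw [hj]
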